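/- arXiv:2311.01106 — 5 statements merged into one kernel-verified Lean document; each statement's English description precedes it below -/
import Mathlib

section
/- The asymmetric softmax function is maxima-preserving: for any u ∈ R^{K+1} and any index y* ∈ {1,...,K+1}, u_{y*} = max_y u_y if and only if ψ̃_{y*}(u) = max_y ψ̃_y(u). In particular, argmax_y ψ̃_y(u) = argmax_y u_y as sets. -/
/-- The asymmetric softmax function of Definition 2. -/
noncomputable def asoftmax (K : ℕ) (u : Fin (K + 1) → ℝ) (y : Fin (K + 1)) : ℝ :=
  if y = Fin.last K then
    Real.exp (u y) /
      ((∑ y' : Fin (K + 1), Real.exp (u y')) - ⨆ y' : Fin K, Real.exp (u y'.castSucc))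
  else Real.exp (u y) / ∑ y' : Fin K, Real.exp (u y'.castSucc)

/-- the asymmetric softmax is maxima-preserving: a coordinate
attains the maximum of `u` iff it attains the maximum of `asoftmax K u`.
In particular the argmax sets coincide. -/
theorem asoftmax_maxima_preserving (K : ℕ) (hK : 1 < K)
    (u : Fin (K + 1) → ℝ) (ystar : Fin (K + 1)) :
    ((∀ y : Fin (K + 1), u y ≤ u ystar) ↔
      (∀ y : Fin (K + 1), asoftmax K u y ≤ asoftmax K u ystar)) ∧
    {y : Fin (K + 1) | ∀ y' : Fin (K + 1), u y' ≤ u y} =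
      {y : Fin (K + 1) | ∀ y' : Fin (K + 1), asoftmax K u y' ≤ asoftmax K u y} := by
  have hKpos : 0 < K := by omega
  haveI : Nonempty (Fin K) := ⟨⟨0, hKpos⟩⟩
  set S := ∑ y' : Fin K, Real.exp (u y'.castSucc) with hSdef
  set M := ⨆ y' : Fin K, Real.exp (u y'.castSucc) with hMdef
  set a := Real.exp (u (Fin.last K)) with hadef
  have hbdd : BddAbove (Set.range fun y' : Fin K => Real.exp (u y'.castSucc)) :=
    (Set.finite_range _).bddAbove
  have hle_M : ∀ j : Fin K, Real.exp (u j.castSucc) ≤ M := fun j => le_ciSup hbdd j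
  obtain ⟨j0, hj0⟩ := Finite.exists_max (fun y' : Fin K => Real.exp (u y'.castSucc))
  have hM_eq : M = Real.exp (u j0.castSucc) := le_antisymm (ciSup_le hj0) (hle_M j0)
  -- pick a second index
  obtain ⟨j1, hj1⟩ : ∃ j1 : Fin K, j1 ≠ j0 := by
    rcases eq_or_ne j0 ⟨0, hKpos⟩ with h | h
    · exact ⟨⟨1, hK⟩, by simp [h, Fin.ext_iff]⟩
    · exact ⟨⟨0, hKpos⟩, fun hc => h (hc ▸ rfl)⟩
  have hpair : Real.exp (u j0.castSucc) + Real.exp (u j1.castSucc) ≤ S := by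
    have h1 := Finset.sum_le_sum_of_subset_of_nonneg
      (Finset.subset_univ ({j0, j1} : Finset (Fin K)))
      (fun i _ _ => (Real.exp_pos (u i.castSucc)).le)
    rwa [Finset.sum_pair (Ne.symm hj1)] at h1
  have hMS : M < S := by
    rw [hM_eq]; nlinarith [Real.exp_pos (u j1.castSucc)]
  have hS : 0 < S := lt_of_le_of_lt (by rw [hM_eq]; exact (Real.exp_pos _).le) hMS
  have ha : 0 < a := Real.exp_pos _
  have hD : 0 < S + a - M := by linarith
  have hpsi : ∀ y : Fin (K + 1), asoftmax K u y =
      if y = Fin.last K then a / (S + a - M) else Real.exp (u y) / S := by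
    intro y
    have hsum : ∑ y' : Fin (K + 1), Real.exp (u y') = S + a := by
      rw [Fin.sum_univ_castSucc]
    unfold asoftmax
    rw [hsum]
    by_cases hy : y = Fin.last K
    · simp [hy, hadef, hMdef]
    · simp [hy, hSdef]
  have key : ∀ ys : Fin (K + 1),
      (∀ y, u y ≤ u ys) ↔ (∀ y, asoftmax K u y ≤ asoftmax K u ys) := by
    intro ys
    by_cases hys : ys = Fin.last K
    · subst hys
      constructor
      · intro h y
        rw [hpsi, hpsi, if_pos rfl]
        by_cases hy : y = Fin.last K
        · rw [if_pos hy]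
        · rw [if_neg hy]
          obtain ⟨j, rfl⟩ := Fin.exists_castSucc_eq.mpr hy
          have hb : (0:ℝ) < Real.exp (u j.castSucc) := Real.exp_pos _
          have hbM : Real.exp (u j.castSucc) ≤ M := hle_M j
          have hMa : M ≤ a := by rw [hM_eq]; exact Real.exp_le_exp.mpr (h _)
          rw [div_le_div_iff₀ hS hD]
          nlinarith [mul_nonneg (sub_nonneg.mpr hMa) (sub_nonneg.mpr hMS.le),
            mul_nonneg (sub_nonneg.mpr hbM) hD.le]
      · intro h
        have h0 := h j0.castSucc
        rw [hpsi, hpsi, if_pos rfl, if_neg (Fin.castSucc_lt_last j0).ne,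
          div_le_div_iff₀ hS hD, ← hM_eq] at h0
        have hMa : M ≤ a := by nlinarith
        intro y
        by_cases hy : y = Fin.last K
        · rw [hy]
        · obtain ⟨j, rfl⟩ := Fin.exists_castSucc_eq.mpr hy
          have := (hle_M j).trans hMa
          exact Real.exp_le_exp.mp this
    · obtain ⟨js, rfl⟩ := Fin.exists_castSucc_eq.mpr hys
      set m := Real.exp (u js.castSucc) with hmdef
      have hm : 0 < m := Real.exp_pos _
      constructor
      · intro h y
        have hmM : m = M :=
          le_antisymm (hle_M js) (ciSup_le fun j => Real.exp_le_exp.mpr (h _))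
        have ham : a ≤ m := Real.exp_le_exp.mpr (h (Fin.last K))
        rw [hpsi, hpsi, if_neg hys]
        by_cases hy : y = Fin.last K
        · rw [if_pos hy, div_le_div_iff₀ hD hS, ← hmdef]
          nlinarith [hmM, mul_nonneg (sub_nonneg.mpr ham) (sub_nonneg.mpr hMS.le)]
        · rw [if_neg hy]
          exact div_le_div_of_nonneg_right (Real.exp_le_exp.mpr (h y)) hS.le
      · intro h
        have hcs : ∀ j : Fin K, u j.castSucc ≤ u js.castSucc := by
          intro j
          have hj := h j.castSucc
          rw [hpsi, hpsi, if_neg hys, if_neg (Fin.castSucc_lt_last j).ne,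
            div_le_div_iff₀ hS hS] at hj
          have := le_of_mul_le_mul_right hj hS
          exact Real.exp_le_exp.mp this
        have hmM : m = M :=
          le_antisymm (hle_M js) (ciSup_le fun j => Real.exp_le_exp.mpr (hcs _))
        have hlast := h (Fin.last K)
        rw [hpsi, hpsi, if_neg hys, if_pos rfl, div_le_div_iff₀ hD hS] at hlast
        have ham : a ≤ m := by rw [hmM]; nlinarith [hmM ▸ hMS]
        intro y
        by_cases hy : y = Fin.last K
        · rw [hy]; exact Real.exp_le_exp.mp ham
        · obtain ⟨j, rfl⟩ := Fin.exists_castSucc_eq.mpr hy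
          exact hcs j
  refine ⟨key ystar, ?_⟩
  ext y
  simpa using key y
end

section
/- Let y1 = argmax_{y∈{1,...,K}} u_y. If u_{K+1} > u_{y1}, then ψ̃_{K+1}(u) > ψ̃_{y1}(u); and if u_{y1} ≥ u_{K+1}, then ψ̃_{y1}(u) ≥ ψ̃_{K+1}(u). -/
/-- comparison of the last coordinate of the asymmetric softmax
with its largest among the first K coordinates. -/
theorem asoftmax_last_vs_argmax (K : ℕ) (hK : 1 < K)
    (u : Fin (K + 1) → ℝ) (y1 : Fin K)
    (hy1 : ∀ y : Fin K, u y.castSucc ≤ u y1.castSucc) :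
    (u (Fin.last K) > u y1.castSucc →
        asoftmax K u (Fin.last K) > asoftmax K u y1.castSucc) ∧
    (u y1.castSucc ≥ u (Fin.last K) →
        asoftmax K u y1.castSucc ≥ asoftmax K u (Fin.last K)) := by
  haveI : Nonempty (Fin K) := ⟨⟨0, by omega⟩⟩
  set S := ∑ y' : Fin K, Real.exp (u y'.castSucc) with hS
  set M := Real.exp (u y1.castSucc) with hMdef
  set L := Real.exp (u (Fin.last K)) with hLdef
  have hM : (⨆ y' : Fin K, Real.exp (u y'.castSucc)) = M :=
    le_antisymm (ciSup_le fun y => Real.exp_le_exp.2 (hy1 y))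
      (le_ciSup (f := fun y' : Fin K => Real.exp (u y'.castSucc)) (Set.Finite.bddAbove (Set.finite_range _)) y1)
  -- M < S
  obtain ⟨j, hj⟩ : ∃ j : Fin K, j ≠ y1 :=
    Fintype.exists_ne_of_one_lt_card (by simpa using hK) y1
  have hMS : M < S := by
    rw [hS, hMdef]
    exact Finset.single_lt_sum (f := fun k : Fin K => Real.exp (u k.castSucc)) hj (Finset.mem_univ _) (Finset.mem_univ _)
      (Real.exp_pos _) fun k _ _ => (Real.exp_pos _).le
  have hLpos : 0 < L := Real.exp_pos _
  have hMpos : 0 < M := Real.exp_pos _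
  have hsum : ∑ y' : Fin (K + 1), Real.exp (u y') = S + L := by
    rw [Fin.sum_univ_castSucc]
  have hne : (y1.castSucc : Fin (K + 1)) ≠ Fin.last K :=
    ne_of_lt (Fin.castSucc_lt_last y1)
  have hA : asoftmax K u (Fin.last K) = L / (S - M + L) := by
    simp only [asoftmax, eq_self_iff_true, if_true, hsum, hM]
    ring_nf
    rfl
  have hB : asoftmax K u y1.castSucc = M / S := by
    simp only [asoftmax, if_neg hne]
    rfl
  have hDpos : 0 < S - M + L := by linarith
  constructor
  · intro h
    have hML : M < L := Real.exp_lt_exp.2 h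
    rw [hA, hB, gt_iff_lt, div_lt_div_iff₀ (by linarith) hDpos]
    nlinarith
  · intro h
    have hLM : L ≤ M := Real.exp_le_exp.2 h
    rw [hA, hB, ge_iff_le, div_le_div_iff₀ hDpos (by linarith)]
    nlinarith
end

section
/- Fix a probability vector η ∈ Δ^K with all coordinates positive and a value c ∈ (0,1). The function u ↦ −Σ_y η_y log ψ̃_y(u) − (1−c) log(1 − ψ̃_{K+1}(u)) − c log ψ̃_{K+1}(u) over u ∈ R^{K+1} is minimized exactly when ψ̃_y(u) = η_y for all y ∈ {1,...,K} and ψ̃_{K+1}(u) = c. -/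
/-- The pointwise conditional risk of the asymmetric softmax-parameterized loss
under class posterior η and expert accuracy c. -/
noncomputable def condRisk (K : ℕ) (η : Fin K → ℝ) (c : ℝ)
    (u : Fin (K + 1) → ℝ) : ℝ :=
  -(∑ y : Fin K, η y * Real.log (asoftmax K u y.castSucc))
    - (1 - c) * Real.log (1 - asoftmax K u (Fin.last K))
    - c * Real.log (asoftmax K u (Fin.last K))

/-! ### Auxiliary lemmas -/

private lemma log_term_le {w p : ℝ} (hw : 0 < w) (hp : 0 < p) :
    w * Real.log p - w * Real.log w ≤ p - w := by
  have h := Real.log_le_sub_one_of_pos (show 0 < p / w by positivity)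
  rw [Real.log_div hp.ne' hw.ne'] at h
  have h2 := mul_le_mul_of_nonneg_left h hw.le
  rw [mul_sub, mul_sub, mul_div_cancel₀ _ hw.ne', mul_one] at h2
  linarith

private lemma log_term_lt {w p : ℝ} (hw : 0 < w) (hp : 0 < p) (hne : p ≠ w) :
    w * Real.log p - w * Real.log w < p - w := by
  have hne' : p / w ≠ 1 := fun h => hne ((div_eq_one_iff_eq hw.ne').mp h)
  have h := Real.log_lt_sub_one_of_pos (show 0 < p / w by positivity) hne'
  rw [Real.log_div hp.ne' hw.ne'] at h
  have h2 := mul_lt_mul_of_pos_left h hw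
  rw [mul_sub, mul_sub, mul_div_cancel₀ _ hw.ne', mul_one] at h2
  linarith

private lemma gibbs_le {ι : Type*} [Fintype ι] (w p : ι → ℝ)
    (hw : ∀ i, 0 < w i) (hp : ∀ i, 0 < p i)
    (hws : ∑ i, w i = 1) (hps : ∑ i, p i = 1) :
    ∑ i, w i * Real.log (p i) ≤ ∑ i, w i * Real.log (w i) := by
  have h : ∑ i, (w i * Real.log (p i) - w i * Real.log (w i)) ≤ ∑ i, (p i - w i) :=
    Finset.sum_le_sum fun i _ => log_term_le (hw i) (hp i)
  rw [Finset.sum_sub_distrib, Finset.sum_sub_distrib, hws, hps] at h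
  linarith

private lemma gibbs_lt {ι : Type*} [Fintype ι] (w p : ι → ℝ)
    (hw : ∀ i, 0 < w i) (hp : ∀ i, 0 < p i)
    (hws : ∑ i, w i = 1) (hps : ∑ i, p i = 1)
    (hne : ∃ i, p i ≠ w i) :
    ∑ i, w i * Real.log (p i) < ∑ i, w i * Real.log (w i) := by
  obtain ⟨i₀, hi₀⟩ := hne
  have h : ∑ i, (w i * Real.log (p i) - w i * Real.log (w i)) < ∑ i, (p i - w i) :=
    Finset.sum_lt_sum (fun i _ => log_term_le (hw i) (hp i))
      ⟨i₀, Finset.mem_univ _, log_term_lt (hw i₀) (hp i₀) hi₀⟩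
  rw [Finset.sum_sub_distrib, Finset.sum_sub_distrib, hws, hps] at h
  linarith

private lemma gibbs2_le {c q : ℝ} (hc : 0 < c) (hc1 : c < 1) (hq : 0 < q) (hq1 : q < 1) :
    c * Real.log q + (1 - c) * Real.log (1 - q) ≤
      c * Real.log c + (1 - c) * Real.log (1 - c) := by
  have h1 := log_term_le hc hq
  have h2 := log_term_le (show (0:ℝ) < 1 - c by linarith) (show (0:ℝ) < 1 - q by linarith)
  linarith

private lemma gibbs2_lt {c q : ℝ} (hc : 0 < c) (hc1 : c < 1) (hq : 0 < q) (hq1 : q < 1)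
    (hne : q ≠ c) :
    c * Real.log q + (1 - c) * Real.log (1 - q) <
      c * Real.log c + (1 - c) * Real.log (1 - c) := by
  have h1 := log_term_lt hc hq hne
  have h2 := log_term_le (show (0:ℝ) < 1 - c by linarith) (show (0:ℝ) < 1 - q by linarith)
  linarith

/-- The supremum of a positive function on `Fin K` (with `1 < K`) is attained and
strictly less than the sum. -/
private lemma sup_facts {K : ℕ} (hK : 1 < K) (f : Fin K → ℝ) (hf : ∀ i, 0 < f i) :
    (∃ j, (⨆ i, f i) = f j) ∧ (⨆ i, f i) < ∑ i, f i ∧ 0 < (⨆ i, f i) := by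
  haveI : NeZero K := ⟨by omega⟩
  obtain ⟨j, hj⟩ := Finite.exists_max f
  have hbdd : BddAbove (Set.range f) := (Set.finite_range f).bddAbove
  have hM : (⨆ i, f i) = f j := le_antisymm (ciSup_le hj) (le_ciSup hbdd j)
  refine ⟨⟨j, hM⟩, ?_, ?_⟩
  · -- find a second index
    have h2 : ∃ j₂ : Fin K, j₂ ≠ j := by
      rcases eq_or_ne j 0 with h | h
      · exact ⟨⟨1, by omega⟩, by simp [h, Fin.ext_iff]⟩
      · exact ⟨0, fun h' => h h'.symm⟩
    obtain ⟨j₂, hj₂⟩ := h2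
    have hsub : f j + f j₂ ≤ ∑ i, f i := by
      rw [← Finset.sum_pair (show j ≠ j₂ from fun h => hj₂ h.symm)]
      exact Finset.sum_le_sum_of_subset_of_nonneg (Finset.subset_univ _)
        (fun i _ _ => (hf i).le)
    rw [hM]
    linarith [hf j₂]
  · rw [hM]; exact hf j

private lemma asoftmax_castSucc (K : ℕ) (u : Fin (K + 1) → ℝ) (y : Fin K) :
    asoftmax K u y.castSucc =
      Real.exp (u y.castSucc) / ∑ y' : Fin K, Real.exp (u y'.castSucc) := by
  rw [asoftmax, if_neg (Fin.castSucc_lt_last y).ne]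

private lemma asoftmax_last (K : ℕ) (u : Fin (K + 1) → ℝ) :
    asoftmax K u (Fin.last K) =
      Real.exp (u (Fin.last K)) /
        ((∑ y' : Fin K, Real.exp (u y'.castSucc)) + Real.exp (u (Fin.last K))
          - ⨆ y' : Fin K, Real.exp (u y'.castSucc)) := by
  rw [asoftmax, if_pos rfl, Fin.sum_univ_castSucc]

/-- Basic facts about the asymmetric softmax values. -/
private lemma asoftmax_facts (K : ℕ) (hK : 1 < K) (u : Fin (K + 1) → ℝ) :
    (∀ y : Fin K, 0 < asoftmax K u y.castSucc) ∧
    (∑ y : Fin K, asoftmax K u y.castSucc) = 1 ∧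
    0 < asoftmax K u (Fin.last K) ∧ asoftmax K u (Fin.last K) < 1 := by
  haveI : NeZero K := ⟨by omega⟩
  set S := ∑ y' : Fin K, Real.exp (u y'.castSucc) with hSdef
  set M := ⨆ y' : Fin K, Real.exp (u y'.castSucc) with hMdef
  have hS : 0 < S :=
    Finset.sum_pos (fun i _ => Real.exp_pos _) Finset.univ_nonempty
  obtain ⟨_, hMS, _⟩ := sup_facts hK (fun y' : Fin K => Real.exp (u y'.castSucc))
    (fun _ => Real.exp_pos _)
  have hSM : 0 < S - M := by rw [hSdef, hMdef]; linarith [hMS]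
  have hD : 0 < S + Real.exp (u (Fin.last K)) - M := by
    have := Real.exp_pos (u (Fin.last K)); linarith
  refine ⟨fun y => ?_, ?_, ?_, ?_⟩
  · rw [asoftmax_castSucc]
    exact div_pos (Real.exp_pos _) hS
  · simp_rw [asoftmax_castSucc]
    rw [← Finset.sum_div, div_self hS.ne']
  · rw [asoftmax_last]
    exact div_pos (Real.exp_pos _) hD
  · rw [asoftmax_last, div_lt_one hD]
    linarith

/-- The candidate minimizing value of the conditional risk. -/
private lemma condRisk_ge (K : ℕ) (hK : 1 < K)
    (η : Fin K → ℝ) (hpos : ∀ y, 0 < η y) (hsum : ∑ y, η y = 1)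
    (c : ℝ) (hc : 0 < c) (hc1 : c < 1) (u : Fin (K + 1) → ℝ) :
    -(∑ y : Fin K, η y * Real.log (η y)) - (1 - c) * Real.log (1 - c)
        - c * Real.log c ≤ condRisk K η c u := by
  obtain ⟨hp, hps, hq, hq1⟩ := asoftmax_facts K hK u
  have h1 := gibbs_le η (fun y => asoftmax K u y.castSucc) hpos hp hsum hps
  have h2 := gibbs2_le hc hc1 hq hq1
  rw [condRisk]
  linarith

private lemma condRisk_gt (K : ℕ) (hK : 1 < K)
    (η : Fin K → ℝ) (hpos : ∀ y, 0 < η y) (hsum : ∑ y, η y = 1)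
    (c : ℝ) (hc : 0 < c) (hc1 : c < 1) (u : Fin (K + 1) → ℝ)
    (hne : (∃ y : Fin K, asoftmax K u y.castSucc ≠ η y) ∨
      asoftmax K u (Fin.last K) ≠ c) :
    -(∑ y : Fin K, η y * Real.log (η y)) - (1 - c) * Real.log (1 - c)
        - c * Real.log c < condRisk K η c u := by
  obtain ⟨hp, hps, hq, hq1⟩ := asoftmax_facts K hK u
  rw [condRisk]
  rcases hne with ⟨y₀, hy₀⟩ | hqc
  · have h1 := gibbs_lt η (fun y => asoftmax K u y.castSucc) hpos hp hsum hps ⟨y₀, hy₀⟩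
    have h2 := gibbs2_le hc hc1 hq hq1
    linarith
  · have h1 := gibbs_le η (fun y => asoftmax K u y.castSucc) hpos hp hsum hps
    have h2 := gibbs2_lt hc hc1 hq hq1 hqc
    linarith

/-- There exists a score vector realizing the posterior and expert accuracy. -/
private lemma exists_realizer (K : ℕ) (hK : 1 < K)
    (η : Fin K → ℝ) (hpos : ∀ y, 0 < η y) (hsum : ∑ y, η y = 1)
    (c : ℝ) (hc : 0 < c) (hc1 : c < 1) :
    ∃ v : Fin (K + 1) → ℝ, (∀ y : Fin K, asoftmax K v y.castSucc = η y) ∧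
      asoftmax K v (Fin.last K) = c := by
  obtain ⟨⟨j, hj⟩, hMlt, hMpos⟩ := sup_facts hK η hpos
  set M := ⨆ i, η i with hMdef
  have hM1 : M < 1 := by rw [← hsum]; exact hMlt
  set t := Real.log (c * (1 - M) / (1 - c)) with htdef
  set v : Fin (K + 1) → ℝ := Fin.snoc (fun y : Fin K => Real.log (η y)) t with hvdef
  have hvc : ∀ y : Fin K, v y.castSucc = Real.log (η y) := fun y => by
    simp [hvdef]
  have hvl : v (Fin.last K) = t := by simp [hvdef]
  have hexp : ∀ y : Fin K, Real.exp (v y.castSucc) = η y := fun y => by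
    rw [hvc y, Real.exp_log (hpos y)]
  have hSv : (∑ y' : Fin K, Real.exp (v y'.castSucc)) = 1 := by
    simp_rw [hexp]; exact hsum
  have hMv : (⨆ y' : Fin K, Real.exp (v y'.castSucc)) = M := by
    rw [hMdef]; exact iSup_congr hexp
  have h1M : (0:ℝ) < 1 - M := by linarith
  have h1c : (0:ℝ) < 1 - c := by linarith
  have hepos : (0:ℝ) < c * (1 - M) / (1 - c) := div_pos (mul_pos hc h1M) h1c
  have het : Real.exp t = c * (1 - M) / (1 - c) := by
    rw [htdef, Real.exp_log hepos]
  refine ⟨v, fun y => ?_, ?_⟩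
  · rw [asoftmax_castSucc, hSv, hexp, div_one]
  · rw [asoftmax_last, hSv, hMv, hvl, het]
    rw [div_eq_iff (by linarith : (0:ℝ) < 1 + c * (1 - M) / (1 - c) - M).ne']
    field_simp
    ring

/-- the conditional risk is minimized exactly when the asymmetric
softmax recovers the class posterior and the expert accuracy. -/
theorem condRisk_minimized_iff (K : ℕ) (hK : 1 < K)
    (η : Fin K → ℝ) (hpos : ∀ y, 0 < η y) (hsum : ∑ y, η y = 1)
    (c : ℝ) (hc : 0 < c) (hc1 : c < 1) (u : Fin (K + 1) → ℝ) :
    (∀ v : Fin (K + 1) → ℝ, condRisk K η c u ≤ condRisk K η c v) ↔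
      ((∀ y : Fin K, asoftmax K u y.castSucc = η y) ∧
        asoftmax K u (Fin.last K) = c) := by
  obtain ⟨v₀, hv₀p, hv₀q⟩ := exists_realizer K hK η hpos hsum c hc hc1
  have hv₀val : condRisk K η c v₀ =
      -(∑ y : Fin K, η y * Real.log (η y)) - (1 - c) * Real.log (1 - c)
        - c * Real.log c := by
    rw [condRisk, hv₀q]
    congr 2
    · congr 1
      exact Finset.sum_congr rfl fun y _ => by rw [hv₀p y]
  constructor
  · intro hmin
    by_contra hcon
    rw [not_and_or] at hcon
    have hne : (∃ y : Fin K, asoftmax K u y.castSucc ≠ η y) ∨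
        asoftmax K u (Fin.last K) ≠ c := by
      rcases hcon with h | h
      · left; push_neg at h; exact h
      · right; exact h
    have h1 := condRisk_gt K hK η hpos hsum c hc hc1 u hne
    have h2 := hmin v₀
    rw [hv₀val] at h2
    linarith
  · rintro ⟨hp, hq⟩ v
    have huval : condRisk K η c u =
        -(∑ y : Fin K, η y * Real.log (η y)) - (1 - c) * Real.log (1 - c)
          - c * Real.log c := by
      rw [condRisk, hq]
      congr 2
      · congr 1
        exact Finset.sum_congr rfl fun y _ => by rw [hp y]
    rw [huval]
    exact condRisk_ge K hK η hpos hsum c hc hc1 v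
end

section
/- Let η ∈ Δ^K, c ∈ [0,1], and let η̂ ∈ Δ^K, ĉ ∈ [0,1] be estimates. Suppose the decision rule defers when ĉ > max_y η̂_y and otherwise predicts argmax_y η̂_y, while the Bayes rule defers when c > max_y η_y and otherwise predicts argmax_y η_y. Then the pointwise 0-1-deferral regret, which equals max(max_y η_y, c) minus the accuracy of the chosen action, is at most ‖η − η̂‖_1 + |c − ĉ|. -/
/-- the pointwise 0-1-deferral regret of the plug-in rule based on
estimates (η̂, ĉ) is bounded by the ℓ1 estimation error plus the expert
accuracy estimation error. The chosen action defers (getting accuracy c) when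
ĉ > max_y η̂_y and otherwise predicts ŷ ∈ argmax_y η̂_y (getting accuracy η ŷ). -/
theorem plugin_deferral_regret_bound (K : ℕ) (hK : 0 < K)
    (η ηhat : Fin K → ℝ) (c chat : ℝ)
    (hη0 : ∀ y, 0 ≤ η y) (hη1 : ∑ y, η y = 1)
    (hηhat0 : ∀ y, 0 ≤ ηhat y) (hηhat1 : ∑ y, ηhat y = 1)
    (hc : c ∈ Set.Icc (0 : ℝ) 1) (hchat : chat ∈ Set.Icc (0 : ℝ) 1)
    (yhat : Fin K) (hyhat : ∀ y, ηhat y ≤ ηhat yhat) :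
    max (⨆ y, η y) c -
        (if chat > ⨆ y, ηhat y then c else η yhat) ≤
      (∑ y, |η y - ηhat y|) + |c - chat| := by
  haveI : Nonempty (Fin K) := ⟨⟨0, hK⟩⟩
  obtain ⟨ys, hys⟩ := Finite.exists_max η
  have hM : (⨆ y, η y) = η ys :=
    le_antisymm (ciSup_le hys) (le_ciSup (Set.Finite.bddAbove (Set.finite_range η)) ys)
  have hMhat : (⨆ y, ηhat y) = ηhat yhat :=
    le_antisymm (ciSup_le hyhat) (le_ciSup (Set.Finite.bddAbove (Set.finite_range ηhat)) yhat)
  rw [hM, hMhat]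
  set S := ∑ y, |η y - ηhat y| with hS
  have hone : ∀ a : Fin K, |η a - ηhat a| ≤ S := fun a =>
    Finset.single_le_sum (f := fun y => |η y - ηhat y|) (fun i _ => abs_nonneg _) (Finset.mem_univ a)
  have hd0 : (0:ℝ) ≤ |c - chat| := abs_nonneg _
  have hS0 : (0:ℝ) ≤ S := Finset.sum_nonneg fun i _ => abs_nonneg _
  have hcd : chat - c ≤ |c - chat| := by rw [abs_sub_comm]; exact le_abs_self _
  have hcd' : c - chat ≤ |c - chat| := le_abs_self _
  split_ifs with h
  · -- defer
    have h1 : η ys - ηhat ys ≤ |η ys - ηhat ys| := le_abs_self _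
    have h2 := hyhat ys
    have h3 := hone ys
    have : max (η ys) c ≤ S + |c - chat| + c := by
      apply max_le _ (by linarith)
      linarith
    linarith
  · -- predict
    push_neg at h
    have key : max (η ys) c ≤ S + |c - chat| + η yhat := by
      apply max_le
      · by_cases hne : ys = yhat
        · subst hne; linarith
        · have htwo : |η ys - ηhat ys| + |η yhat - ηhat yhat| ≤ S := by
            have := Finset.sum_le_sum_of_subset_of_nonneg
              (Finset.subset_univ ({ys, yhat} : Finset (Fin K)))
              (fun i _ _ => abs_nonneg (η i - ηhat i))
            simpa [Finset.sum_pair hne] using this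
          have h1 : η ys - ηhat ys ≤ |η ys - ηhat ys| := le_abs_self _
          have h2 : ηhat yhat - η yhat ≤ |η yhat - ηhat yhat| := by
            rw [abs_sub_comm]; exact le_abs_self _
          have h3 := hyhat ys
          linarith
      · have h2 : ηhat yhat - η yhat ≤ |η yhat - ηhat yhat| := by
          rw [abs_sub_comm]; exact le_abs_self _
        have h3 := hone yhat
        linarith
    linarith
end

section
/- Surjectivity onto the target range: for every η ∈ Δ^K with strictly positive coordinates and every c ∈ (0,1), there exists u ∈ R^{K+1} such that ψ̃_y(u) = η_y for all y ∈ {1,...,K} and ψ̃_{K+1}(u) = c. Explicitly, one may take u_y = log η_y for y ≤ K and u_{K+1} = log(c(1 − max_y η_y)/(1−c)). -/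
/-- surjectivity of the asymmetric softmax onto Δ^K × (0,1): the
explicit choice u_y = log η_y (y ≤ K), u_{K+1} = log(c(1 − max_y η_y)/(1−c))
recovers (η, c). -/
theorem asoftmax_surjective_onto_target (K : ℕ) (hK : 1 < K)
    (η : Fin K → ℝ) (hpos : ∀ y, 0 < η y) (hsum : ∑ y, η y = 1)
    (c : ℝ) (hc0 : 0 < c) (hc1 : c < 1) :
    ∃ u : Fin (K + 1) → ℝ,
      u = Fin.snoc (fun y => Real.log (η y))
            (Real.log (c * (1 - ⨆ y, η y) / (1 - c))) ∧
      (∀ y : Fin K, asoftmax K u y.castSucc = η y) ∧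
      asoftmax K u (Fin.last K) = c := by
  have hKpos : 0 < K := by omega
  haveI : NeZero K := ⟨by omega⟩
  set M : ℝ := ⨆ y, η y with hM
  set u : Fin (K + 1) → ℝ := Fin.snoc (fun y => Real.log (η y))
      (Real.log (c * (1 - M) / (1 - c))) with hu
  have hcast : ∀ y : Fin K, u y.castSucc = Real.log (η y) := by
    intro y; simp [hu, Fin.snoc_castSucc]
  have hexp : ∀ y : Fin K, Real.exp (u y.castSucc) = η y := by
    intro y; rw [hcast y, Real.exp_log (hpos y)]
  have hsum' : ∑ y' : Fin K, Real.exp (u y'.castSucc) = 1 := by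
    rw [Finset.sum_congr rfl fun y _ => hexp y, hsum]
  -- M < 1
  obtain ⟨y0, hy0⟩ := exists_eq_ciSup_of_finite (f := η)
  obtain ⟨y1, hy1⟩ : ∃ y1 : Fin K, y1 ≠ y0 := by
    refine ⟨if y0 = 0 then 1 else 0, ?_⟩
    split <;> simp_all <;> omega
  have hM1 : M < 1 := by
    rw [hM, ← hy0, ← hsum]
    exact Finset.single_lt_sum hy1 (Finset.mem_univ _)
      (Finset.mem_univ _) (hpos y1) (fun _ _ _ => (hpos _).le)
  have harg : 0 < c * (1 - M) / (1 - c) := by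
    apply div_pos (mul_pos hc0 (by linarith)) (by linarith)
  have hlast : u (Fin.last K) = Real.log (c * (1 - M) / (1 - c)) := by
    simp [hu, Fin.snoc_last]
  have hexplast : Real.exp (u (Fin.last K)) = c * (1 - M) / (1 - c) := by
    rw [hlast, Real.exp_log harg]
  have hsupexp : (⨆ y' : Fin K, Real.exp (u y'.castSucc)) = M := by
    rw [hM]; exact congrArg _ (funext hexp)
  refine ⟨u, hu, ?_, ?_⟩
  · intro y
    rw [asoftmax, if_neg (Fin.castSucc_lt_last y).ne, hexp, hsum', div_one]
  · rw [asoftmax, if_pos rfl]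
    rw [Fin.sum_univ_castSucc, hsum', hsupexp, hexplast]
    have h1M : (1:ℝ) - M ≠ 0 := by linarith
    have h1c : (1:ℝ) - c ≠ 0 := by linarith
    have hden : 1 + c * (1 - M) / (1 - c) - M = (1 - M) / (1 - c) := by
      field_simp; ring
    rw [hden, div_div_div_cancel_right₀]
    · exact mul_div_cancel_right₀ c h1M
    · exact h1c
end
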